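/- If {e_{ij}}_{1≤i≤j≤n−1} is the Shi tableau of a dominant region of the m-Shi arrangement of type A_{n−1}, then the restriction {e_{ij}}_{1≤i≤j≤n−2} (removing the first column) is the Shi tableau of a dominant region of the m-Shi arrangement of type A_{n−2}. Moreover, for u ≤ v ≤ n−2, H_{α_{uv},m} is a separating wall for the original region if and only if it is for the restricted region. -/

import Mathlib

open Finset

namespace Shi

/-- Inner product of `x` with the positive root `α_{ij} = e_i - e_{j+1}` (0-indexed
`i ≤ j ≤ n-2`). -/
def inn (x : ℕ → ℝ) (i j : ℕ) : ℝ := x i - x (j + 1)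

def SumZero (n : ℕ) (x : ℕ → ℝ) : Prop := ∑ i ∈ Finset.range n, x i = 0

/-- `x` is a point of the type `A_{n-1}` ambient space lying in the open dominant chamber
and on no hyperplane of the `m`-Shi arrangement, hence an interior point of a dominant
`m`-Shi region. -/
def RegionPoint (n m : ℕ) (x : ℕ → ℝ) : Prop :=
  SumZero n x ∧
  (∀ i j, i ≤ j → j + 2 ≤ n → 0 < inn x i j) ∧
  (∀ i j, i ≤ j → j + 2 ≤ n → ∀ t : ℤ, -(m : ℤ) < t → t ≤ m → inn x i j ≠ (t : ℝ))

/-- `e` is the Shi tableau of the dominant `m`-Shi region containing `x`: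
`e_{ij} = min(⌊⟨x, α_{ij}⟩⌋, m)`, which is constant on the region and equals
`min(k_{ij}, m)` for the Shi coordinates `k` of the `m`-minimal alcove of the region. -/
def TabOf (n m : ℕ) (x : ℕ → ℝ) (e : ℕ → ℕ → ℤ) : Prop :=
  ∀ i j, i ≤ j → j + 2 ≤ n → e i j = min ⌊inn x i j⌋ (m : ℤ)

/-- `e` is the Shi tableau of some dominant region of the `m`-Shi arrangement of type
`A_{n-1}`. -/
def IsShiTab (n m : ℕ) (e : ℕ → ℕ → ℤ) : Prop :=
  ∃ x, RegionPoint n m x ∧ TabOf n m x e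

/-- `p` lies in the closure of the `m`-Shi region containing `x`. -/
def InClosure (n m : ℕ) (x p : ℕ → ℝ) : Prop :=
  SumZero n p ∧ ∀ i j, i ≤ j → j + 2 ≤ n → ∀ t : ℤ, -(m : ℤ) < t → t ≤ m →
    (((t : ℝ) < inn x i j → (t : ℝ) ≤ inn p i j) ∧ (inn x i j < t → inn p i j ≤ t))

/-- The hyperplane `H_{α_{uv}, m}` is a separating wall for the dominant `m`-Shi region
containing `x`: the region lies on the far side of the hyperplane from the fundamental
alcove, and the closure of the region contains a point of the hyperplane lying on no other
hyperplane of the arrangement (so the hyperplane supports a facet). -/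
def SepWall (n m : ℕ) (x : ℕ → ℝ) (u v : ℕ) : Prop :=
  (m : ℝ) < inn x u v ∧
  ∃ p, InClosure n m x p ∧ inn p u v = (m : ℝ) ∧
    ∀ i j, i ≤ j → j + 2 ≤ n → ∀ t : ℤ, -(m : ℤ) < t → t ≤ m →
      ¬(i = u ∧ j = v ∧ t = (m : ℤ)) → inn p i j ≠ (t : ℝ)

/-- The combinatorial criterion for `H_{α_{uv}, m}` to be a separating wall. -/
def SepCrit (m : ℕ) (e : ℕ → ℕ → ℤ) (u v : ℕ) : Prop :=
  e u v = (m : ℤ) ∧ ∀ t, u ≤ t → t < v → e u t + e (t + 1) v = (m : ℤ) - 1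

/-- The region with Shi tableau `e` has `H_{α_{uv}, m}` as a separating wall. -/
def SepWallTab (n m : ℕ) (e : ℕ → ℕ → ℤ) (u v : ℕ) : Prop :=
  ∃ x, RegionPoint n m x ∧ TabOf n m x e ∧ SepWall n m x u v

/-- A tableau function normalized to be `0` outside the staircase index domain. -/
def Normalized (n : ℕ) (e : ℕ → ℕ → ℤ) : Prop :=
  ∀ i j, ¬(i ≤ j ∧ j + 2 ≤ n) → e i j = 0

-- helpers
noncomputable def shiftF (k : ℕ) (x : ℕ → ℝ) : ℕ → ℝ := fun i => x i - (∑ t ∈ Finset.range k, x t) / k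

lemma inn_shiftF (k : ℕ) (x : ℕ → ℝ) (i j : ℕ) : inn (shiftF k x) i j = inn x i j := by
  simp [inn, shiftF]

lemma sumZero_shiftF (k : ℕ) (hk : k ≠ 0) (x : ℕ → ℝ) : SumZero k (shiftF k x) := by
  have h : (k:ℝ) ≠ 0 := Nat.cast_ne_zero.mpr hk
  unfold SumZero shiftF
  rw [Finset.sum_sub_distrib, Finset.sum_const, Finset.card_range]
  rw [nsmul_eq_mul]
  field_simp
  ring

lemma lt_iff_le_tab (m : ℕ) (a : ℝ)
    (hav : ∀ t : ℤ, -(m:ℤ) < t → t ≤ m → a ≠ (t:ℝ))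
    (t : ℤ) (ht1 : -(m:ℤ) < t) (ht2 : t ≤ m) :
    ((t:ℝ) < a ↔ t ≤ min ⌊a⌋ (m:ℤ)) := by
  constructor
  · intro h
    exact le_min (Int.le_floor.mpr h.le) ht2
  · intro h
    have h1 : (t:ℝ) ≤ a := Int.le_floor.mp (le_trans h (min_le_left _ _))
    exact lt_of_le_of_ne h1 (fun hh => hav t ht1 ht2 hh.symm)

lemma lt_iff_lt_tab (m : ℕ) (a : ℝ)
    (hav : ∀ t : ℤ, -(m:ℤ) < t → t ≤ m → a ≠ (t:ℝ))
    (t : ℤ) (ht1 : -(m:ℤ) < t) (ht2 : t ≤ m) :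
    (a < (t:ℝ) ↔ min ⌊a⌋ (m:ℤ) < t) := by
  have h := lt_iff_le_tab m a hav t ht1 ht2
  constructor
  · intro hh
    by_contra hc
    push_neg at hc
    have := h.mpr hc
    linarith
  · intro hh
    rcases lt_trichotomy a (t:ℝ) with h' | h' | h'
    · exact h'
    · exact absurd h' (hav t ht1 ht2)
    · have := h.mp h'
      omega

lemma floor_add_le_floor (a b : ℝ) : ⌊a⌋ + ⌊b⌋ ≤ ⌊a + b⌋ := by
  apply Int.le_floor.mpr; push_cast; linarith [Int.floor_le a, Int.floor_le b]

lemma floor_le_floor_add (a b : ℝ) : ⌊a + b⌋ ≤ ⌊a⌋ + ⌊b⌋ + 1 := by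
  have : ⌊a+b⌋ < ⌊a⌋ + ⌊b⌋ + 2 := by
    apply Int.floor_lt.mpr; push_cast
    linarith [Int.lt_floor_add_one a, Int.lt_floor_add_one b]
  omega

lemma region_restrict (n m : ℕ) (hn : 3 ≤ n) (x : ℕ → ℝ) (hx : RegionPoint n m x) :
    RegionPoint (n-1) m (shiftF (n-1) x) := by
  refine ⟨sumZero_shiftF _ (by omega) x, ?_, ?_⟩
  · intro i j hij hj
    rw [inn_shiftF]
    exact hx.2.1 i j hij (by omega)
  · intro i j hij hj t ht1 ht2
    rw [inn_shiftF]
    exact hx.2.2 i j hij (by omega) t ht1 ht2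

lemma tab_restrict (n m : ℕ) (hn : 3 ≤ n) (x : ℕ → ℝ) (e : ℕ → ℕ → ℤ)
    (htab : TabOf n m x e) : TabOf (n-1) m (shiftF (n-1) x) e := by
  intro i j hij hj
  rw [inn_shiftF]
  exact htab i j hij (by omega)

lemma sep_restrict (n m : ℕ) (hn : 3 ≤ n) (x : ℕ → ℝ) (u v : ℕ)
    (hsep : SepWall n m x u v) : SepWall (n-1) m (shiftF (n-1) x) u v := by
  obtain ⟨h1, p, ⟨hpz, hpcl⟩, hpm, hgen⟩ := hsep
  refine ⟨by rw [inn_shiftF]; exact h1, shiftF (n-1) p,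
    ⟨sumZero_shiftF _ (by omega) p, ?_⟩, by rw [inn_shiftF]; exact hpm, ?_⟩
  · intro i j hij hj t ht1 ht2
    rw [inn_shiftF, inn_shiftF]
    exact hpcl i j hij (by omega) t ht1 ht2
  · intro i j hij hj t ht1 ht2 hnot
    rw [inn_shiftF]
    exact hgen i j hij (by omega) t ht1 ht2 hnot

lemma backward_key (n m : ℕ) (hn : 3 ≤ n) (hm : 1 ≤ m) (e : ℕ → ℕ → ℤ)
    (x0 : ℕ → ℝ) (hx0 : RegionPoint n m x0) (htab0 : TabOf n m x0 e)
    (u v : ℕ) (huv : u ≤ v) (hv : v + 2 ≤ n - 1)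
    (y : ℕ → ℝ) (hy : RegionPoint (n-1) m y) (hytab : TabOf (n-1) m y e)
    (heuv : e u v = (m:ℤ))
    (p' : ℕ → ℝ) (hpcl : ∀ i j, i ≤ j → j + 2 ≤ n-1 → ∀ t : ℤ, -(m : ℤ) < t → t ≤ m →
      (((t : ℝ) < inn y i j → (t : ℝ) ≤ inn p' i j) ∧ (inn y i j < t → inn p' i j ≤ t)))
    (hpgen : ∀ i j, i ≤ j → j + 2 ≤ n-1 → ∀ t : ℤ, -(m : ℤ) < t → t ≤ m →
      ¬(i = u ∧ j = v ∧ t = (m : ℤ)) → inn p' i j ≠ (t : ℝ)) :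
    ∀ i ∈ Finset.range (n-1), ∀ k ∈ Finset.range (n-1), e i (n-2) < m →
      p' i - (e i (n-2) : ℝ) - 1 < p' k - (e k (n-2) : ℝ) := by
  obtain ⟨hyz, hypos, hyav⟩ := hy
  obtain ⟨hxz, hxpos, hxav⟩ := hx0
  have hw1 : n - 2 + 1 = n - 1 := by omega
  have hw2 : n - 2 + 2 = n := by omega
  intro i hi k hk hcim
  simp only [Finset.mem_range] at hi hk
  rcases lt_trichotomy i k with hik | rfl | hki
  · -- i < k
    have hk1 : k - 1 + 1 = k := by omega
    set a := inn x0 i (k-1) with ha_def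
    set b := inn x0 k (n-2) with hb_def
    have habc : inn x0 i (n-2) = a + b := by
      show x0 i - x0 (n-2+1) = (x0 i - x0 (k-1+1)) + (x0 k - x0 (n-2+1))
      rw [hk1]; ring
    have hfb0 : 0 ≤ ⌊b⌋ := Int.floor_nonneg.mpr (hxpos k (n-2) (by omega) (by omega)).le
    have hfa0 : 0 ≤ ⌊a⌋ := Int.floor_nonneg.mpr (hxpos i (k-1) (by omega) (by omega)).le
    have hci : e i (n-2) = min ⌊a+b⌋ (m:ℤ) := by
      rw [← habc]; exact htab0 i (n-2) (by omega) (by omega)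
    have hcifl : e i (n-2) = ⌊a+b⌋ := by omega
    have hflab : ⌊a+b⌋ ≤ (m:ℤ) - 1 := by omega
    have hadd := floor_add_le_floor a b
    have hfam : ⌊a⌋ ≤ (m:ℤ) - 1 := by omega
    have hfbm : ⌊b⌋ ≤ (m:ℤ) - 1 := by omega
    have hE : e i (k-1) = ⌊a⌋ := by
      have := htab0 i (k-1) (by omega) (by omega)
      rw [← ha_def] at this; omega
    have hck : e k (n-2) = ⌊b⌋ := by
      have := htab0 k (n-2) (by omega) (by omega)
      rw [← hb_def] at this; omega
    have hpik : p' i - p' k = inn p' i (k-1) := by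
      show _ = p' i - p' (k-1+1)
      rw [hk1]
    -- inn p' i (k-1) < ⌊a⌋ + 1
    have hEy : e i (k-1) = min ⌊inn y i (k-1)⌋ (m:ℤ) := hytab i (k-1) (by omega) (by omega)
    have hyfl : ⌊inn y i (k-1)⌋ = ⌊a⌋ := by omega
    have hylt : inn y i (k-1) < ((⌊a⌋ + 1 : ℤ) : ℝ) := by
      push_cast
      rw [← hyfl]
      push_cast
      exact Int.lt_floor_add_one _
    have hple : inn p' i (k-1) ≤ ((⌊a⌋ + 1 : ℤ) : ℝ) :=
      (hpcl i (k-1) (by omega) (by omega) (⌊a⌋+1) (by omega) (by omega)).2 hylt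
    have hpne : inn p' i (k-1) ≠ ((⌊a⌋ + 1 : ℤ) : ℝ) := by
      apply hpgen i (k-1) (by omega) (by omega) (⌊a⌋+1) (by omega) (by omega)
      rintro ⟨rfl, rfl, h3⟩
      rw [heuv] at hE
      omega
    have hplt : inn p' i (k-1) < ((⌊a⌋ + 1 : ℤ) : ℝ) := lt_of_le_of_ne hple hpne
    have hgoal : (e i (n-2) : ℝ) - (e k (n-2) : ℝ) + 1 ≥ ((⌊a⌋ + 1 : ℤ) : ℝ) := by
      rw [hcifl, hck]
      push_cast
      have : (⌊a⌋ : ℝ) + (⌊b⌋ : ℝ) ≤ (⌊a+b⌋ : ℝ) := by exact_mod_cast hadd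
      linarith
    rw [← hpik] at hplt
    linarith
  · -- i = k
    linarith
  · -- k < i
    have hi1 : i - 1 + 1 = i := by omega
    set a := inn x0 k (i-1) with ha_def
    set b := inn x0 i (n-2) with hb_def
    have habc : inn x0 k (n-2) = a + b := by
      show x0 k - x0 (n-2+1) = (x0 k - x0 (i-1+1)) + (x0 i - x0 (n-2+1))
      rw [hi1]; ring
    have hfb0 : 0 ≤ ⌊b⌋ := Int.floor_nonneg.mpr (hxpos i (n-2) (by omega) (by omega)).le
    have hfa0 : 0 ≤ ⌊a⌋ := Int.floor_nonneg.mpr (hxpos k (i-1) (by omega) (by omega)).le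
    have hE : e k (i-1) = min ⌊a⌋ (m:ℤ) := by
      have := htab0 k (i-1) (by omega) (by omega)
      rw [← ha_def] at this; exact this
    have hEy : e k (i-1) = min ⌊inn y k (i-1)⌋ (m:ℤ) := hytab k (i-1) (by omega) (by omega)
    have hci : e i (n-2) = ⌊b⌋ := by
      have := htab0 i (n-2) (by omega) (by omega)
      rw [← hb_def] at this; omega
    have hck : e k (n-2) = min ⌊a+b⌋ (m:ℤ) := by
      rw [← habc]; exact htab0 k (n-2) (by omega) (by omega)
    have hpki : p' k - p' i = inn p' k (i-1) := by
      show _ = p' k - p' (i-1+1)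
      rw [hi1]
    -- goal: e k (n-2) - e i (n-2) - 1 < inn p' k (i-1)
    have hmain : (e k (n-2) : ℝ) - (e i (n-2) : ℝ) - 1 < inn p' k (i-1) := by
      by_cases hfam : (m:ℤ) ≤ ⌊a⌋
      · -- E = m, inn p' ≥ m
        have hym : ((m:ℤ):ℝ) < inn y k (i-1) := by
          have hyfl : (m:ℤ) ≤ ⌊inn y k (i-1)⌋ := by omega
          have h1 : ((m:ℤ):ℝ) ≤ inn y k (i-1) := Int.le_floor.mp hyfl
          exact lt_of_le_of_ne h1
            (fun hh => hyav k (i-1) (by omega) (by omega) m (by omega) le_rfl hh.symm)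
        have hpge : ((m:ℤ):ℝ) ≤ inn p' k (i-1) :=
          (hpcl k (i-1) (by omega) (by omega) m (by omega) le_rfl).1 hym
        have h1 : e k (n-2) ≤ (m:ℤ) := by omega
        have h2 : 0 ≤ e i (n-2) := by omega
        have : (e k (n-2) : ℝ) ≤ (m:ℝ) := by exact_mod_cast h1
        have h2' : (0:ℝ) ≤ (e i (n-2) : ℝ) := by exact_mod_cast h2
        push_cast at hpge
        linarith
      · -- ⌊a⌋ ≤ m - 1
        push_neg at hfam
        have hEa : e k (i-1) = ⌊a⌋ := by omega
        have hyfl : ⌊inn y k (i-1)⌋ = ⌊a⌋ := by omega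
        have hygt : ((⌊a⌋:ℤ):ℝ) < inn y k (i-1) := by
          have h1 : ((⌊a⌋:ℤ):ℝ) ≤ inn y k (i-1) := by
            rw [← hyfl]; exact Int.floor_le _
          exact lt_of_le_of_ne h1
            (fun hh => hyav k (i-1) (by omega) (by omega) ⌊a⌋ (by omega) (by omega) hh.symm)
        have hpge : ((⌊a⌋:ℤ):ℝ) ≤ inn p' k (i-1) :=
          (hpcl k (i-1) (by omega) (by omega) ⌊a⌋ (by omega) (by omega)).1 hygt
        have hpne : inn p' k (i-1) ≠ ((⌊a⌋:ℤ):ℝ) := by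
          apply hpgen k (i-1) (by omega) (by omega) ⌊a⌋ (by omega) (by omega)
          rintro ⟨rfl, rfl, h3⟩
          omega
        have hpgt : ((⌊a⌋:ℤ):ℝ) < inn p' k (i-1) := lt_of_le_of_ne hpge (Ne.symm hpne)
        have hub := floor_le_floor_add a b
        have h1 : e k (n-2) - e i (n-2) - 1 ≤ ⌊a⌋ := by omega
        have h1' : (e k (n-2) : ℝ) - (e i (n-2) : ℝ) - 1 ≤ ((⌊a⌋:ℤ):ℝ) := by
          exact_mod_cast h1
        linarith
    rw [← hpki] at hmain
    linarith

lemma backward (n m : ℕ) (hn : 3 ≤ n) (hm : 1 ≤ m) (e : ℕ → ℕ → ℤ)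
    (x0 : ℕ → ℝ) (hx0 : RegionPoint n m x0) (htab0 : TabOf n m x0 e)
    (u v : ℕ) (huv : u ≤ v) (hv : v + 2 ≤ n - 1)
    (y : ℕ → ℝ) (hy : RegionPoint (n-1) m y) (hytab : TabOf (n-1) m y e)
    (hsep : SepWall (n-1) m y u v) : SepWall n m x0 u v := by
  obtain ⟨hym, p', ⟨hpz, hpcl⟩, hpm, hpgen⟩ := hsep
  obtain ⟨hxz, hxpos, hxav⟩ := hx0
  have hx0' : RegionPoint n m x0 := ⟨hxz, hxpos, hxav⟩
  -- e u v = m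
  have heuv : e u v = (m:ℤ) := by
    have h1 := hytab u v huv hv
    have h2 : (m:ℤ) ≤ ⌊inn y u v⌋ := Int.le_floor.mpr (by exact_mod_cast hym.le)
    omega
  -- m < inn x0 u v
  have hmx : (m:ℝ) < inn x0 u v := by
    have h1 := htab0 u v huv (by omega)
    rw [heuv] at h1
    have hfl : (m:ℤ) ≤ ⌊inn x0 u v⌋ := by omega
    have h2 : ((m:ℤ):ℝ) ≤ inn x0 u v := Int.le_floor.mp hfl
    push_cast at h2
    exact lt_of_le_of_ne h2
      (fun hh => hxav u v huv (by omega) m (by omega) le_rfl (by exact_mod_cast hh.symm))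
  have key := backward_key n m hn hm e x0 hx0' htab0 u v huv hv y hy hytab heuv p' hpcl hpgen
  -- entries of the last column
  have hc_def : ∀ i, i ≤ n-2 → e i (n-2) = min ⌊inn x0 i (n-2)⌋ (m:ℤ) :=
    fun i hi => htab0 i (n-2) hi (by omega)
  have hc_nonneg : ∀ i, i ≤ n-2 → 0 ≤ e i (n-2) := by
    intro i hi
    have h1 := hc_def i hi
    have h2 : 0 ≤ ⌊inn x0 i (n-2)⌋ :=
      Int.floor_nonneg.mpr (hxpos i (n-2) hi (by omega)).le
    omega
  have hc_le : ∀ i, i ≤ n-2 → e i (n-2) ≤ (m:ℤ) := by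
    intro i hi
    have := hc_def i hi
    omega
  -- choose s
  have hIne : (Finset.range (n-1)).Nonempty := ⟨0, by simp; omega⟩
  set rightf : ℕ → ℝ := fun k => p' k - (e k (n-2) : ℝ) with hrightf
  set R : ℝ := ((Finset.range (n-1)).image rightf).min' (hIne.image _) with hR
  set leftf : ℕ → ℝ := fun i => if e i (n-2) = (m:ℤ) then R - 1 else p' i - (e i (n-2) : ℝ) - 1
    with hleftf
  set L : ℝ := ((Finset.range (n-1)).image leftf).max' (hIne.image _) with hL
  have hRle : ∀ k ∈ Finset.range (n-1), R ≤ rightf k := by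
    intro k hk
    exact Finset.min'_le _ _ (Finset.mem_image_of_mem _ hk)
  have hLge : ∀ i ∈ Finset.range (n-1), leftf i ≤ L := by
    intro i hi
    exact Finset.le_max' _ _ (Finset.mem_image_of_mem _ hi)
  have hLR : L < R := by
    rw [hL]
    apply Finset.max'_lt_iff _ _ |>.mpr
    intro b hb
    obtain ⟨i, hi, rfl⟩ := Finset.mem_image.mp hb
    by_cases hcim : e i (n-2) = (m:ℤ)
    · simp only [hleftf, if_pos hcim]
      have : R ≤ rightf i := hRle i hi
      linarith [hRle i hi]
    · simp only [hleftf, if_neg hcim]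
      rw [hR]
      apply Finset.lt_min'_iff _ _ |>.mpr
      intro r hr
      obtain ⟨k, hk, rfl⟩ := Finset.mem_image.mp hr
      have hlt : e i (n-2) < (m:ℤ) :=
        lt_of_le_of_ne (hc_le i (by simp at hi; omega)) hcim
      exact key i hi k hk hlt
  obtain ⟨s, hs1, hs2⟩ := exists_between hLR
  have hsr : ∀ i, i ≤ n-2 → (e i (n-2) : ℝ) < p' i - s := by
    intro i hi
    have h1 : R ≤ rightf i := hRle i (by simp; omega)
    simp only [hrightf] at h1
    linarith
  have hsl : ∀ i, i ≤ n-2 → e i (n-2) < (m:ℤ) → p' i - s < (e i (n-2) : ℝ) + 1 := by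
    intro i hi hlt
    have h1 : leftf i ≤ L := hLge i (by simp; omega)
    simp only [hleftf, if_neg (by omega : ¬ e i (n-2) = (m:ℤ))] at h1
    linarith
  -- define p
  set p : ℕ → ℝ := fun i => (if i = n-1 then s else p' i) - s/n with hp
  have hinn1 : ∀ i j, i ≤ j → j + 2 ≤ n - 1 → inn p i j = inn p' i j := by
    intro i j hij hj
    show (if i = n-1 then s else p' i) - s/n - ((if j+1 = n-1 then s else p' (j+1)) - s/n) = _
    rw [if_neg (by omega), if_neg (by omega)]
    show p' i - s/n - (p' (j+1) - s/n) = p' i - p' (j+1)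
    ring
  have hinn2 : ∀ i, i ≤ n-2 → inn p i (n-2) = p' i - s := by
    intro i hi
    show (if i = n-1 then s else p' i) - s/n - ((if n-2+1 = n-1 then s else p' (n-2+1)) - s/n) = _
    rw [if_neg (by omega), if_pos (by omega)]
    ring
  have hpzsum : SumZero n p := by
    unfold SumZero
    have hnn : n - 1 + 1 = n := by omega
    rw [← hnn, Finset.sum_range_succ]
    have h1 : ∀ i ∈ Finset.range (n-1), p i = p' i - s/n := by
      intro i hi
      simp only [Finset.mem_range] at hi
      simp only [hp]
      rw [if_neg (by omega)]
    rw [Finset.sum_congr rfl h1, Finset.sum_sub_distrib, Finset.sum_const, Finset.card_range]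
    have hpn : p (n-1) = s - s/n := by simp [hp]
    rw [hpn]
    have hpz' : ∑ i ∈ Finset.range (n-1), p' i = 0 := hpz
    rw [hpz']
    have hn0 : (n:ℝ) ≠ 0 := Nat.cast_ne_zero.mpr (by omega)
    have hcast : ((n-1 : ℕ) : ℝ) = (n:ℝ) - 1 := by
      push_cast [Nat.cast_sub (by omega : 1 ≤ n)]
      ring
    rw [nsmul_eq_mul, hcast]
    field_simp
    ring
  -- assemble SepWall
  refine ⟨hmx, p, ⟨hpzsum, ?_⟩, ?_, ?_⟩
  · -- closure
    intro i j hij hj t ht1 ht2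
    by_cases hjn : j + 2 ≤ n - 1
    · rw [hinn1 i j hij hjn]
      have hex : e i j = min ⌊inn x0 i j⌋ (m:ℤ) := htab0 i j hij hj
      have hey : e i j = min ⌊inn y i j⌋ (m:ℤ) := hytab i j hij hjn
      have hxa : ∀ t : ℤ, -(m:ℤ) < t → t ≤ m → inn x0 i j ≠ (t:ℝ) :=
        fun t ht1 ht2 => hxav i j hij hj t ht1 ht2
      have hya : ∀ t : ℤ, -(m:ℤ) < t → t ≤ m → inn y i j ≠ (t:ℝ) :=
        fun t ht1 ht2 => hy.2.2 i j hij hjn t ht1 ht2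
      constructor
      · intro h
        have h1 : t ≤ min ⌊inn x0 i j⌋ (m:ℤ) := (lt_iff_le_tab m _ hxa t ht1 ht2).mp h
        have h2 : (t:ℝ) < inn y i j := (lt_iff_le_tab m _ hya t ht1 ht2).mpr (by omega)
        exact (hpcl i j hij hjn t ht1 ht2).1 h2
      · intro h
        have h1 : min ⌊inn x0 i j⌋ (m:ℤ) < t := (lt_iff_lt_tab m _ hxa t ht1 ht2).mp h
        have h2 : inn y i j < (t:ℝ) := (lt_iff_lt_tab m _ hya t ht1 ht2).mpr (by omega)
        exact (hpcl i j hij hjn t ht1 ht2).2 h2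
    · have hj2 : j = n - 2 := by omega
      subst hj2
      have hin2 : i ≤ n - 2 := hij
      rw [hinn2 i hin2]
      have hex := hc_def i hin2
      have hxa : ∀ t : ℤ, -(m:ℤ) < t → t ≤ m → inn x0 i (n-2) ≠ (t:ℝ) :=
        fun t ht1 ht2 => hxav i (n-2) hij (by omega) t ht1 ht2
      constructor
      · intro h
        have h1 : t ≤ min ⌊inn x0 i (n-2)⌋ (m:ℤ) := (lt_iff_le_tab m _ hxa t ht1 ht2).mp h
        have h2 : t ≤ e i (n-2) := by omega
        have h3 : (t:ℝ) ≤ (e i (n-2) : ℝ) := by exact_mod_cast h2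
        linarith [hsr i hin2]
      · intro h
        have h1 : min ⌊inn x0 i (n-2)⌋ (m:ℤ) < t := (lt_iff_lt_tab m _ hxa t ht1 ht2).mp h
        have h2 : e i (n-2) < t := by omega
        have hlt : e i (n-2) < (m:ℤ) := by omega
        have h3 : (e i (n-2) : ℝ) + 1 ≤ (t:ℝ) := by exact_mod_cast h2
        linarith [hsl i hin2 hlt]
  · -- on the wall
    rw [hinn1 u v huv hv]
    exact hpm
  · -- genericity
    intro i j hij hj t ht1 ht2 hnot
    by_cases hjn : j + 2 ≤ n - 1
    · rw [hinn1 i j hij hjn]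
      exact hpgen i j hij hjn t ht1 ht2 hnot
    · have hj2 : j = n - 2 := by omega
      subst hj2
      have hin2 : i ≤ n - 2 := hij
      rw [hinn2 i hin2]
      rcases le_or_gt t (e i (n-2)) with hte | hte
      · have h3 : (t:ℝ) ≤ (e i (n-2) : ℝ) := by exact_mod_cast hte
        have := hsr i hin2
        intro hc
        rw [hc] at this
        linarith
      · have hlt : e i (n-2) < (m:ℤ) := by omega
        have h2 : e i (n-2) + 1 ≤ t := hte
        have h3 : (e i (n-2) : ℝ) + 1 ≤ (t:ℝ) := by exact_mod_cast h2
        have := hsl i hin2 hlt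
        intro hc
        rw [hc] at this
        linarith
/-- removing the first column of the Shi tableau of a dominant `m`-Shi region
of type `A_{n-1}` gives the Shi tableau of a region of type `A_{n-2}`, and for
`u ≤ v ≤ n-3` the wall `H_{α_{uv},m}` is separating for the original region iff it is for
the restricted one. -/
theorem restrict_tableau (n m : ℕ) (hn : 3 ≤ n) (hm : 1 ≤ m) (e : ℕ → ℕ → ℤ)
    (he : IsShiTab n m e) :
    IsShiTab (n - 1) m e ∧
    ∀ u v, u ≤ v → v + 2 ≤ n - 1 →
      (SepWallTab n m e u v ↔ SepWallTab (n - 1) m e u v) := by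
  obtain ⟨x0, hx0, htab0⟩ := he
  constructor
  · exact ⟨shiftF (n-1) x0, region_restrict n m hn x0 hx0, tab_restrict n m hn x0 e htab0⟩
  · intro u v huv hv
    constructor
    · rintro ⟨x, hx, htab, hsep⟩
      exact ⟨shiftF (n-1) x, region_restrict n m hn x hx, tab_restrict n m hn x e htab,
        sep_restrict n m hn x u v hsep⟩
    · rintro ⟨y, hy, hytab, hysep⟩
      exact ⟨x0, hx0, htab0, backward n m hn hm e x0 hx0 htab0 u v huv hv y hy hytab hysep⟩

end Shi
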